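/- Let h_1,...,h_r : Z → X and f_1,...,f_r : X → Y be fibrewise maps over B such that f_i ∘ h_s ≃_B f_{i+1} ∘ h_s for all 1 ≤ i ≤ r−1 and 2 ≤ s ≤ r. Then D_B(f_1∘h_1,...,f_r∘h_1) ≤ D_B(h_1,...,h_r). -/

import Mathlib

open Set

/-- Two continuous maps are fibrewise homotopic over `B`: there is a homotopy
whose every time-slice commutes with the projections to `B`. -/
def FibHomotopic {B X Y : Type*} [TopologicalSpace B] [TopologicalSpace X] [TopologicalSpace Y]
    (pX : X → B) (pY : Y → B) (f g : C(X, Y)) : Prop :=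
  ∃ H : f.Homotopy g, ∀ (x : X) (t : unitInterval), pY (H (t, x)) = pX x

/-- Sequential parametrized homotopic distance of a family of fibrewise maps:
the least `n` such that `X` admits an open cover by `n + 1` open sets on each of
which all the maps are pairwise fibrewise homotopic (`∞` if none exists). -/
noncomputable def fibDist {B X Y ι : Type*} [TopologicalSpace B] [TopologicalSpace X]
    [TopologicalSpace Y] (pX : X → B) (pY : Y → B) (f : ι → C(X, Y)) : ℕ∞ :=
  sInf {n : ℕ∞ | ∃ k : ℕ, (k : ℕ∞) = n ∧ ∃ U : Fin (k + 1) → Set X,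
    (∀ i, IsOpen (U i)) ∧ (⋃ i, U i) = Set.univ ∧
    ∀ i s t, FibHomotopic (fun x : U i => pX (x : X)) pY
      ((f s).restrict (U i)) ((f t).restrict (U i))}

section Aux
variable {B X Y Z : Type*} [TopologicalSpace B] [TopologicalSpace X] [TopologicalSpace Y]
  [TopologicalSpace Z] {pX : X → B} {pY : Y → B} {pZ : Z → B}

lemma fibHom_refl (f : C(X, Y)) (hf : ∀ x, pY (f x) = pX x) : FibHomotopic pX pY f f :=
  ⟨ContinuousMap.Homotopy.refl f, fun x _ => hf x⟩

lemma FibHomotopic.symm {f g : C(X, Y)} (h : FibHomotopic pX pY f g) :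
    FibHomotopic pX pY g f := by
  obtain ⟨H, hH⟩ := h
  exact ⟨H.symm, fun x t => hH x (unitInterval.symm t)⟩

lemma FibHomotopic.trans {f g k : C(X, Y)} (h₁ : FibHomotopic pX pY f g)
    (h₂ : FibHomotopic pX pY g k) : FibHomotopic pX pY f k := by
  obtain ⟨H, hH⟩ := h₁; obtain ⟨K, hK⟩ := h₂
  refine ⟨H.trans K, fun x t => ?_⟩
  rw [ContinuousMap.Homotopy.trans_apply]
  split_ifs <;> [exact hH x _; exact hK x _]

lemma fibHom_comp (f : C(X, Y)) (hf : ∀ x, pY (f x) = pX x) {g₁ g₂ : C(Z, X)}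
    (hg : FibHomotopic pZ pX g₁ g₂) : FibHomotopic pZ pY (f.comp g₁) (f.comp g₂) := by
  obtain ⟨H, hH⟩ := hg
  exact ⟨⟨⟨fun p => f (H p), by continuity⟩, by simp, by simp⟩,
    fun x t => (hf _).trans (hH x t)⟩

lemma fibHom_restrict {F G : C(Z, Y)} (hFG : FibHomotopic pZ pY F G) (U : Set Z) :
    FibHomotopic (fun x : U => pZ x) pY (F.restrict U) (G.restrict U) := by
  obtain ⟨H, hH⟩ := hFG
  exact ⟨⟨⟨fun p => H (p.1, p.2), by continuity⟩, by simp [ContinuousMap.restrict],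
    by simp [ContinuousMap.restrict]⟩, fun x t => hH x t⟩

end Aux

/-- If `f_i ∘ h_s ≃_B f_{i+1} ∘ h_s` for all `i` and all `s ≥ 2`, then
`D_B(f_1 ∘ h_1, …, f_r ∘ h_1) ≤ D_B(h_1, …, h_r)`. -/
theorem stmt8 {B X Y Z : Type*} [TopologicalSpace B] [TopologicalSpace X] [TopologicalSpace Y]
    [TopologicalSpace Z] (pX : X → B) (pY : Y → B) (pZ : Z → B)
    (hpX : Continuous pX) (hpY : Continuous pY) (hpZ : Continuous pZ)
    (r : ℕ) (hr : 0 < r)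
    (h : Fin r → C(Z, X)) (hh : ∀ i z, pX (h i z) = pZ z)
    (f : Fin r → C(X, Y)) (hf : ∀ i x, pY (f i x) = pX x)
    (hcomp : ∀ (i : ℕ) (hi : i + 1 < r) (s : Fin r), 1 ≤ s.val →
      FibHomotopic pZ pY ((f ⟨i, by omega⟩).comp (h s)) ((f ⟨i + 1, hi⟩).comp (h s))) :
    fibDist pZ pY (fun i => (f i).comp (h ⟨0, hr⟩)) ≤ fibDist pZ pX h := by
  apply sInf_le_sInf
  rintro n ⟨k, hk, U, hUopen, hUcov, hUhom⟩
  refine ⟨k, hk, U, hUopen, hUcov, fun i s t => ?_⟩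
  set h1 : Fin r := ⟨0, hr⟩ with hh1
  have key : ∀ a : ℕ, ∀ ha : a < r,
      FibHomotopic (fun x : U i => pZ (x : Z)) pY
        (((f h1).comp (h h1)).restrict (U i)) (((f ⟨a, ha⟩).comp (h h1)).restrict (U i)) := by
    intro a
    induction a with
    | zero =>
      intro ha
      exact fibHom_refl _ (fun x => (hf _ _).trans (hh _ _))
    | succ a ih =>
      intro ha
      have ha' : a < r := by omega
      refine (ih ha').trans ?_
      set s' : Fin r := ⟨a + 1, ha⟩ with hs'
      have step1 : FibHomotopic (fun x : U i => pZ (x : Z)) pY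
          (((f ⟨a, ha'⟩).comp (h h1)).restrict (U i))
          (((f ⟨a, ha'⟩).comp (h s')).restrict (U i)) :=
        fibHom_comp (f ⟨a, ha'⟩) (hf _) (hUhom i h1 s')
      have step2 : FibHomotopic (fun x : U i => pZ (x : Z)) pY
          (((f ⟨a, ha'⟩).comp (h s')).restrict (U i))
          (((f ⟨a + 1, ha⟩).comp (h s')).restrict (U i)) :=
        fibHom_restrict (hcomp a ha s' (by simp [hs'])) (U i)
      have step3 : FibHomotopic (fun x : U i => pZ (x : Z)) pY
          (((f ⟨a + 1, ha⟩).comp (h s')).restrict (U i))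
          (((f ⟨a + 1, ha⟩).comp (h h1)).restrict (U i)) :=
        fibHom_comp (f ⟨a + 1, ha⟩) (hf _) (hUhom i s' h1)
      exact (step1.trans step2).trans step3
  have hs := key s.1 s.2
  have ht := key t.1 t.2
  simpa using hs.symm.trans ht
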